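/- Let K be a field of characteristic zero and l a positive integer. For i = 1, …, l let m_i be a positive integer, j_i < m_i, and H_i : ℕ → K a sequence such that the section n ↦ H_i(m_i·n + j_i) is P-recursive. Then the sequence s : ℕ → K defined by s(n) = Σ_{i=1}^{l} H_i(n)·χ_{n≡j_i (mod m_i)} is P-recursive. In particular, every hypergeometric-type sequence is holonomic. -/

import Mathlib

/-- A sequence `a : ℕ → K` is P-recursive (holonomic) if there exist `d` and
polynomials `p 0, …, p d`, not all zero, with
`∑ i, p i (n) * a (n + i) = 0` for all `n`. -/
def IsPRecursive {K : Type*} [Field K] (a : ℕ → K) : Prop :=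
  ∃ (d : ℕ) (p : Fin (d + 1) → Polynomial K),
    (∃ i, p i ≠ 0) ∧
    ∀ n : ℕ, ∑ i : Fin (d + 1), (p i).eval (n : K) * a (n + (i : ℕ)) = 0

section Aux
open Polynomial Finset

lemma la_lemma {K : Type*} [Field K] {ι : Type*} [Fintype ι]
    (U : Fin (Fintype.card ι + 1) → ι → Polynomial K) :
    ∃ q : Fin (Fintype.card ι + 1) → Polynomial K,
      (∃ k, q k ≠ 0) ∧ ∀ t : ι, ∑ k, q k * U k t = 0 := by
  classical
  let R := Polynomial K
  let F := FractionRing R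
  let φ : R →+* F := algebraMap R F
  have hφ : Function.Injective φ := IsFractionRing.injective R F
  -- vectors in ι → F
  let W : Fin (Fintype.card ι + 1) → ι → F := fun k t => φ (U k t)
  have hnli : ¬ LinearIndependent F W := by
    intro h
    have := h.fintype_card_le_finrank
    simp [Module.finrank_pi] at this
  obtain ⟨g, hg0, k0, hk0⟩ := Fintype.not_linearIndependent_iff.mp hnli
  obtain ⟨b, hb⟩ := IsLocalization.exist_integer_multiples (nonZeroDivisors R)
    (Finset.univ) g
  choose q hq using fun k => hb k (Finset.mem_univ k)
  refine ⟨q, ⟨k0, ?_⟩, ?_⟩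
  · intro h
    have hb0 : φ (b : R) ≠ 0 := by
      simpa using fun hh => nonZeroDivisors.ne_zero b.2 (hφ (by simpa using hh))
    have : φ (q k0) = (b : R) • g k0 := hq k0
    rw [h] at this
    have : (b : R) • g k0 = 0 := by simpa using this.symm
    rw [Algebra.smul_def] at this
    rcases mul_eq_zero.mp this with h1 | h1
    · exact hb0 (by simpa using h1)
    · exact hk0 h1
  · intro t
    apply hφ
    have : ∑ k, g k • W k = 0 := hg0
    have ht := congrFun this t
    simp only [Finset.sum_apply, Pi.smul_apply, Pi.zero_apply, smul_eq_mul] at ht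
    rw [map_sum, map_zero]
    calc ∑ k, φ (q k * U k t) = ∑ k, ((b : R) • g k) * W k t := by
          simp only [map_mul]
          exact Finset.sum_congr rfl fun k _ => by rw [hq k]
      _ = φ (b : R) * ∑ k, g k * W k t := by
          rw [Finset.mul_sum]
          exact Finset.sum_congr rfl fun k _ => by
            rw [Algebra.smul_def]; ring
      _ = 0 := by rw [ht, mul_zero]

/-- comp with X + C s is nonzero -/
lemma comp_X_add_C_ne_zero' {K : Type*} [Field K] {p : Polynomial K} (hp : p ≠ 0) (s : K) :
    p.comp (X + C s) ≠ 0 := by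
  intro h
  apply hp
  have := congrArg (fun q => q.comp (X - C s)) h
  simpa [Polynomial.comp_assoc, Polynomial.add_comp, Polynomial.sub_comp] using this

lemma step_lemma {K : Type*} [Field K] (a : ℕ → K) (M e : ℕ) (hM : 0 < M)
    (q : ℕ → Polynomial K) (hq : q e ≠ 0)
    (hrec : ∀ n : ℕ, ∑ i ∈ range (e + 1), (q i).eval (n : K) * a (n + M * i) = 0)
    (k : ℕ) :
    ∃ h : Polynomial K, h ≠ 0 ∧ ∃ u : ℕ → Polynomial K,
      ∀ n : ℕ, h.eval (n : K) * a (n + k) =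
        ∑ t ∈ range (M * e), (u t).eval (n : K) * a (n + t) := by
  classical
  induction k using Nat.strong_induction_on with
  | _ k IH =>
  by_cases hk : k < M * e
  · refine ⟨1, one_ne_zero, fun t => if t = k then 1 else 0, fun n => ?_⟩
    rw [Finset.sum_eq_single k]
    · simp
    · intro t _ ht; simp [ht]
    · intro hmem; exact absurd (Finset.mem_range.mpr hk) hmem
  · push_neg at hk
    set s := k - M * e with hs
    have hks : k = s + M * e := by omega
    have IH' : ∀ i : ℕ, ∃ h : Polynomial K, h ≠ 0 ∧ ∃ u : ℕ → Polynomial K,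
        (i < e → ∀ n : ℕ, h.eval (n : K) * a (n + (s + M * i)) =
          ∑ t ∈ range (M * e), (u t).eval (n : K) * a (n + t)) := by
      intro i
      by_cases hi : i < e
      · have hlt : s + M * i < k := by
          have : M * i < M * e := (Nat.mul_lt_mul_left hM).mpr hi
          omega
        obtain ⟨h, hne, u, hu⟩ := IH _ hlt
        exact ⟨h, hne, u, fun _ => hu⟩
      · exact ⟨1, one_ne_zero, fun _ => 0, fun h => absurd h hi⟩
    choose h hne u hu using IH'
    refine ⟨(q e).comp (X + C (s : K)) * ∏ i ∈ range e, h i, ?_, ?_⟩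
    · exact mul_ne_zero (comp_X_add_C_ne_zero' hq _)
        (Finset.prod_ne_zero_iff.mpr fun i _ => hne i)
    · refine ⟨fun t => -∑ i ∈ range e,
        (q i).comp (X + C (s : K)) * (∏ i' ∈ (range e).erase i, h i') * u i t, fun n => ?_⟩
      have hrec' := hrec (n + s)
      rw [Finset.sum_range_succ] at hrec'
      have hcast : ((n + s : ℕ) : K) = (n : K) + s := by push_cast; ring
      have key : (q e).eval ((n : K) + s) * a (n + s + M * e) =
          -∑ i ∈ range e, (q i).eval ((n : K) + s) * a (n + s + M * i) := by
        rw [hcast] at hrec'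
        linear_combination hrec'
      have heval : ∀ p : Polynomial K, (p.comp (X + C (s : K))).eval (n : K)
          = p.eval ((n : K) + s) := by
        intro p; simp [eval_comp]
      calc ((q e).comp (X + C (s : K)) * ∏ i ∈ range e, h i).eval (n : K) * a (n + k)
          = (∏ i ∈ range e, (h i).eval (n : K)) *
            ((q e).eval ((n : K) + s) * a (n + s + M * e)) := by
            rw [eval_mul, heval, eval_prod, hks, ← Nat.add_assoc]; ring
        _ = (∏ i ∈ range e, (h i).eval (n : K)) *
            (-∑ i ∈ range e, (q i).eval ((n : K) + s) * a (n + s + M * i)) := by rw [key]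
        _ = -∑ i ∈ range e, (q i).eval ((n : K) + s) *
              ((∏ i' ∈ (range e).erase i, (h i').eval (n : K)) *
               ((h i).eval (n : K) * a (n + (s + M * i)))) := by
            rw [mul_neg, Finset.mul_sum, neg_inj]
            refine Finset.sum_congr rfl fun i hi => ?_
            rw [← Nat.add_assoc]
            have := Finset.mul_prod_erase (range e) (fun i' => (h i').eval (n : K)) hi
            rw [← this]
            ring
        _ = -∑ i ∈ range e, ∑ t ∈ range (M * e), (q i).eval ((n : K) + s) *
              ((∏ i' ∈ (range e).erase i, (h i').eval (n : K)) *
               ((u i t).eval (n : K) * a (n + t))) := by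
            congr 1
            refine Finset.sum_congr rfl fun i hi => ?_
            rw [hu i (Finset.mem_range.mp hi), Finset.mul_sum, Finset.mul_sum]
        _ = ∑ t ∈ range (M * e),
              (-∑ i ∈ range e, (q i).comp (X + C (s : K)) *
                (∏ i' ∈ (range e).erase i, h i') * u i t).eval (n : K) * a (n + t) := by
            rw [Finset.sum_comm, neg_eq_iff_eq_neg, ← Finset.sum_neg_distrib]
            refine Finset.sum_congr rfl fun t _ => ?_
            simp only [eval_neg, eval_finset_sum, eval_mul, eval_prod, heval, neg_mul,
              neg_neg, neg_inj]
            rw [Finset.sum_mul]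
            exact Finset.sum_congr rfl fun i _ => by ring

lemma perSeq {K : Type*} [Field K] [CharZero K] (m jj : ℕ) (hm : 0 < m) (hj : jj < m)
    (Hf : ℕ → K) (hrec : IsPRecursive (fun n => Hf (m * n + jj))) :
    ∃ (e : ℕ) (q : ℕ → Polynomial K), q e ≠ 0 ∧
      ∀ n : ℕ, ∑ i ∈ range (e + 1), (q i).eval (n : K) *
        (Hf (n + m * i) * (if (n + m * i) % m = jj then (1 : K) else 0)) = 0 := by
  classical
  obtain ⟨d, p, ⟨i0, hi0⟩, hp⟩ := hrec
  have hmK : (m : K) ≠ 0 := Nat.cast_ne_zero.mpr hm.ne'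
  set lin : Polynomial K := C ((m : K))⁻¹ * (X - C (jj : K)) with hlin
  set g : Polynomial K := C (m : K) * X + C (jj : K) with hg
  have hlincomp : lin.comp g = X := by
    rw [hlin, hg]
    simp only [mul_comp, C_comp, sub_comp, X_comp]
    ring_nf
    rw [← C_mul, inv_mul_cancel₀ hmK]
    simp
  set r : ℕ → Polynomial K := fun t => if h : t < d + 1 then (p ⟨t, h⟩).comp lin else 0
    with hr
  have hrne : ∀ (t : ℕ) (ht : t < d + 1), p ⟨t, ht⟩ ≠ 0 → r t ≠ 0 := by
    intro t ht hpt hcon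
    apply hpt
    have : ((p ⟨t, ht⟩).comp lin).comp g = 0 := by
      rw [show (p ⟨t, ht⟩).comp lin = r t by simp [hr, ht]; intro h; omega, hcon, zero_comp]
    rwa [comp_assoc, hlincomp, comp_X] at this
  -- the m-spaced recurrence for the indicator sequence, full range d
  have main : ∀ n : ℕ, ∑ t ∈ range (d + 1), (r t).eval (n : K) *
      (Hf (n + m * t) * (if (n + m * t) % m = jj then (1 : K) else 0)) = 0 := by
    intro n
    by_cases hn : n % m = jj
    · set w := n / m with hw
      have hnw : m * w + jj = n := by rw [hw, ← hn]; exact Nat.div_add_mod n m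
      have hsum := hp w
      rw [← Fin.sum_univ_eq_sum_range (fun t => (r t).eval (n : K) *
        (Hf (n + m * t) * (if (n + m * t) % m = jj then (1 : K) else 0))) (d + 1)]
      refine Eq.trans (Finset.sum_congr rfl fun i _ => ?_) hsum
      have hi : (i : ℕ) < d + 1 := i.2
      have h1 : r (i : ℕ) = (p i).comp lin := by simp [hr, hi]; intro h; omega
      have hcast : (n : K) = (m : K) * w + jj := by
        rw [← hnw]; push_cast; ring
      have hevlin : eval (n : K) lin = (w : K) := by
        rw [hlin]
        simp only [eval_mul, eval_sub, eval_C, eval_X, hcast]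
        field_simp
        ring
      have h2 : (r (i : ℕ)).eval (n : K) = (p i).eval (w : K) := by
        rw [h1, eval_comp, hevlin]
      have h3 : n + m * (i : ℕ) = m * (w + (i : ℕ)) + jj := by
        rw [Nat.mul_add]; omega
      have h4 : (Hf (n + m * (i : ℕ)) * (if (n + m * (i : ℕ)) % m = jj then (1 : K) else 0))
          = Hf (m * (w + (i : ℕ)) + jj) := by
        rw [h3]
        have hmod : (m * (w + (i : ℕ)) + jj) % m = jj := by
          rw [Nat.mul_add_mod]; exact Nat.mod_eq_of_lt hj
        rw [if_pos hmod, mul_one]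
      rw [h2, h4]
    · refine Finset.sum_eq_zero fun t _ => ?_
      have : (n + m * t) % m = n % m := Nat.add_mul_mod_self_left n m t
      simp [this, hn]
  have hi0' : r (i0 : ℕ) ≠ 0 := hrne i0.1 i0.2 (by simpa using hi0)
  set S := (range (d + 1)).filter (fun t => r t ≠ 0) with hS
  have hSne : S.Nonempty := ⟨i0, by simp [hS, hi0', i0.2]⟩
  set e := S.max' hSne with he
  have heS : e ∈ S := S.max'_mem hSne
  obtain ⟨hed, he0⟩ := Finset.mem_filter.mp heS
  refine ⟨e, r, he0, fun n => ?_⟩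
  have hsub : range (e + 1) ⊆ range (d + 1) := by
    intro x hx
    simp only [Finset.mem_range] at *
    omega
  calc ∑ i ∈ range (e + 1), (r i).eval (n : K) *
        (Hf (n + m * i) * (if (n + m * i) % m = jj then (1 : K) else 0))
      = ∑ t ∈ range (d + 1), (r t).eval (n : K) *
        (Hf (n + m * t) * (if (n + m * t) % m = jj then (1 : K) else 0)) := by
        refine Finset.sum_subset hsub fun x hx hnx => ?_
        have hx0 : r x = 0 := by
          by_contra hxx
          have hxS : x ∈ S := Finset.mem_filter.mpr ⟨hx, hxx⟩
          have := Finset.le_max' S x hxS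
          exact hnx (Finset.mem_range.mpr (by omega))
        rw [hx0, eval_zero, zero_mul]
    _ = 0 := main n

end Aux

open Polynomial Finset in
theorem stmt9 {K : Type*} [Field K] [CharZero K] (l : ℕ) (hl : 0 < l)
    (m : Fin l → ℕ) (hm : ∀ i, 0 < m i)
    (j : Fin l → ℕ) (hj : ∀ i, j i < m i)
    (H : Fin l → ℕ → K)
    (hH : ∀ i, IsPRecursive (fun n => H i (m i * n + j i))) :
    IsPRecursive (fun n => ∑ i : Fin l, H i n * (if n % m i = j i then (1 : K) else 0)) := by
  classical
  set a : Fin l → ℕ → K := fun i n => H i n * (if n % m i = j i then (1 : K) else 0) with ha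
  choose e qq hq hqrec using fun i : Fin l =>
    perSeq (m i) (j i) (hm i) (hj i) (H i) (hH i)
  have h2 : ∀ (i : Fin l) (k : ℕ), ∃ h : Polynomial K, h ≠ 0 ∧ ∃ u : ℕ → Polynomial K,
      ∀ n : ℕ, h.eval (n : K) * a i (n + k) =
        ∑ t ∈ range (m i * e i), (u t).eval (n : K) * a i (n + t) := by
    intro i k
    exact step_lemma (a i) (m i) (e i) (hm i) (qq i) (hq i) (fun n => hqrec i n) k
  choose h hne u hu using h2
  set N := Fintype.card ((i : Fin l) × Fin (m i * e i)) with hN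
  set G : Polynomial K := ∏ k ∈ range (N + 1), ∏ i : Fin l, h i k with hG
  have hGne : G ≠ 0 := by
    rw [hG]
    refine Finset.prod_ne_zero_iff.mpr fun k _ => ?_
    exact Finset.prod_ne_zero_iff.mpr fun i _ => hne i k
  set U : Fin (N + 1) → ((i : Fin l) × Fin (m i * e i)) → Polynomial K :=
    fun k σ => (∏ k' ∈ (range (N + 1)).erase (k : ℕ), ∏ i' : Fin l, h i' k') *
      (∏ i' ∈ Finset.univ.erase σ.1, h i' (k : ℕ)) * u σ.1 (k : ℕ) σ.2 with hU
  have key : ∀ (k : Fin (N + 1)) (n : ℕ),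
      G.eval (n : K) * ∑ i : Fin l, a i (n + (k : ℕ)) =
        ∑ σ : (i : Fin l) × Fin (m i * e i),
          (U k σ).eval (n : K) * a σ.1 (n + (σ.2 : ℕ)) := by
    intro k n
    have hmem : (k : ℕ) ∈ range (N + 1) := Finset.mem_range.mpr k.2
    have hGsplit : G = (∏ k' ∈ (range (N + 1)).erase (k : ℕ), ∏ i' : Fin l, h i' k') *
        ∏ i' : Fin l, h i' (k : ℕ) := by
      rw [hG, Finset.prod_erase_mul _ _ hmem]
    calc G.eval (n : K) * ∑ i : Fin l, a i (n + (k : ℕ))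
        = ∑ i : Fin l, (∏ k' ∈ (range (N + 1)).erase (k : ℕ),
            ∏ i' : Fin l, (h i' k').eval (n : K)) *
            ((∏ i' ∈ Finset.univ.erase i, (h i' (k : ℕ)).eval (n : K)) *
             ((h i (k : ℕ)).eval (n : K) * a i (n + (k : ℕ)))) := by
          rw [hGsplit, Finset.mul_sum]
          refine Finset.sum_congr rfl fun i _ => ?_
          rw [← Finset.mul_prod_erase Finset.univ (fun i' => h i' (k : ℕ))
            (Finset.mem_univ i)]
          simp only [eval_mul, eval_prod]
          ring
      _ = ∑ i : Fin l, ∑ t ∈ range (m i * e i),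
            ((∏ k' ∈ (range (N + 1)).erase (k : ℕ),
              ∏ i' : Fin l, (h i' k').eval (n : K)) *
             (∏ i' ∈ Finset.univ.erase i, (h i' (k : ℕ)).eval (n : K)) *
             (u i (k : ℕ) t).eval (n : K)) * a i (n + t) := by
          refine Finset.sum_congr rfl fun i _ => ?_
          rw [hu i (k : ℕ) n, Finset.mul_sum, Finset.mul_sum]
          exact Finset.sum_congr rfl fun t _ => by ring
      _ = ∑ i : Fin l, ∑ t : Fin (m i * e i),
            (U k ⟨i, t⟩).eval (n : K) * a i (n + (t : ℕ)) := by
          refine Finset.sum_congr rfl fun i _ => ?_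
          rw [← Fin.sum_univ_eq_sum_range (fun t =>
            ((∏ k' ∈ (range (N + 1)).erase (k : ℕ),
              ∏ i' : Fin l, (h i' k').eval (n : K)) *
             (∏ i' ∈ Finset.univ.erase i, (h i' (k : ℕ)).eval (n : K)) *
             (u i (k : ℕ) t).eval (n : K)) * a i (n + t)) (m i * e i)]
          refine Finset.sum_congr rfl fun t _ => ?_
          simp only [hU, eval_mul, eval_prod]
      _ = ∑ σ : (i : Fin l) × Fin (m i * e i),
            (U k σ).eval (n : K) * a σ.1 (n + (σ.2 : ℕ)) := by
          rw [← Finset.univ_sigma_univ, Finset.sum_sigma]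
  obtain ⟨q, ⟨k0, hk0⟩, hrel⟩ := la_lemma U
  refine ⟨N, fun k => q k * G, ⟨k0, mul_ne_zero hk0 hGne⟩, fun n => ?_⟩
  calc ∑ k : Fin (N + 1), (q k * G).eval (n : K) * ∑ i : Fin l, a i (n + (k : ℕ))
      = ∑ k : Fin (N + 1), (q k).eval (n : K) *
          ∑ σ : (i : Fin l) × Fin (m i * e i),
            (U k σ).eval (n : K) * a σ.1 (n + (σ.2 : ℕ)) := by
        refine Finset.sum_congr rfl fun k _ => ?_
        rw [← key k n, eval_mul]
        ring
    _ = ∑ k : Fin (N + 1), ∑ σ : (i : Fin l) × Fin (m i * e i),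
          (q k).eval (n : K) * ((U k σ).eval (n : K) * a σ.1 (n + (σ.2 : ℕ))) := by
        exact Finset.sum_congr rfl fun k _ => Finset.mul_sum _ _ _
    _ = ∑ σ : (i : Fin l) × Fin (m i * e i), ∑ k : Fin (N + 1),
          (q k).eval (n : K) * ((U k σ).eval (n : K) * a σ.1 (n + (σ.2 : ℕ))) :=
        Finset.sum_comm
    _ = ∑ σ : (i : Fin l) × Fin (m i * e i),
          (∑ k : Fin (N + 1), q k * U k σ).eval (n : K) * a σ.1 (n + (σ.2 : ℕ)) := by
        refine Finset.sum_congr rfl fun σ _ => ?_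
        rw [eval_finset_sum, Finset.sum_mul]
        refine Finset.sum_congr rfl fun k _ => ?_
        simp only [eval_mul]
        ring
    _ = 0 := by
        refine Finset.sum_eq_zero fun σ _ => ?_
        rw [hrel σ, eval_zero, zero_mul]
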